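/- arXiv:2302.13030 — 4 statements merged into one kernel-verified Lean document; each statement's English description precedes it below -/
import Mathlib

section
/- (FRFT derivative formula) Let α ∈ ℝⁿ with no coordinate in πℤ, and let f be a Schwartz function. Then for each k ∈ {1,...,n} and all x ∈ ℝⁿ, F_α(e_{-α}(y) ∂/∂y_k [e_α(y) f(y)])(x) = 2πi x_k csc(α_k) F_α(f)(x). -/
open MeasureTheory Real SchwartzMap Filter
open scoped FourierTransform

noncomputable section

abbrev Rn (n : ℕ) := EuclideanSpace ℝ (Fin n)

/-- The chirp function `e_α(x) = exp(2πi Σₖ (cot αₖ / 2) xₖ²)`. -/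
def chirp {n : ℕ} (α : Rn n) (x : Rn n) : ℂ :=
  Complex.exp (2 * (π : ℂ) * Complex.I *
    ((∑ k, Real.cot (α k) / 2 * (x k) ^ 2 : ℝ) : ℂ))

/-- The constant `c(α) = ∏ₖ √(1 - i cot αₖ)`. -/
def cConst {n : ℕ} (α : Rn n) : ℂ :=
  ∏ k, (1 - Complex.I * (Real.cot (α k) : ℂ)) ^ ((1 : ℂ) / 2)

/-- The FRFT kernel `K_α(x,u)`. -/
def frftKernel {n : ℕ} (α : Rn n) (x u : Rn n) : ℂ :=
  ∏ k, (1 - Complex.I * (Real.cot (α k) : ℂ)) ^ ((1 : ℂ) / 2) *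
    Complex.exp (2 * (π : ℂ) * Complex.I *
      ((Real.cot (α k) / 2 * ((x k) ^ 2 + (u k) ^ 2)
        - x k * u k / Real.sin (α k) : ℝ) : ℂ))

/-- The multidimensional fractional Fourier transform. -/
def frft {n : ℕ} (α : Rn n) (f : Rn n → ℂ) (u : Rn n) : ℂ :=
  ∫ x, f x * frftKernel α x u

/-- `ũ = (u₁ csc α₁, ..., uₙ csc αₙ)`. -/
def tilde {n : ℕ} (α u : Rn n) : Rn n :=
  (EuclideanSpace.equiv (Fin n) ℝ).symm fun k => u k / Real.sin (α k)

/-- `γ(β) = π^{n/2} 2^β Γ(β/2) / Γ((n-β)/2)`. -/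
def gammaC (n : ℕ) (β : ℝ) : ℝ :=
  π ^ ((n : ℝ) / 2) * 2 ^ β * Real.Gamma (β / 2) / Real.Gamma (((n : ℝ) - β) / 2)

/-- The classical Riesz potential `I_β`. -/
def rieszPot (n : ℕ) (β : ℝ) (f : Rn n → ℂ) (x : Rn n) : ℂ :=
  ((1 / gammaC n β : ℝ) : ℂ) * ∫ y, f y / ((‖x - y‖ ^ ((n : ℝ) - β) : ℝ) : ℂ)

/-- The fractional Riesz potential related to chirp functions `I_β^α`. -/
def rieszPotChirp {n : ℕ} (α : Rn n) (β : ℝ) (f : Rn n → ℂ) (x : Rn n) : ℂ :=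
  ((1 / gammaC n β : ℝ) : ℂ) * chirp (-α) x *
    ∫ y, f y * chirp α y / ((‖x - y‖ ^ ((n : ℝ) - β) : ℝ) : ℂ)

/-- `c_n = Γ((n+1)/2)/π^{(n+1)/2}`. -/
def nConst (n : ℕ) : ℝ := Real.Gamma (((n : ℝ) + 1) / 2) / π ^ (((n : ℝ) + 1) / 2)

/-- The j-th fractional Riesz transform related to chirp functions (principal value). -/
def rieszTransChirp {n : ℕ} (α : Rn n) (j : Fin n) (f : Rn n → ℂ) (x : Rn n) : ℂ :=
  ((nConst n : ℝ) : ℂ) * chirp (-α) x *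
    limUnder (nhdsWithin (0 : ℝ) (Set.Ioi 0)) fun ε =>
      ∫ y in {y : Rn n | ε < dist x y},
        (((x j - y j) / ‖x - y‖ ^ ((n : ℝ) + 1) : ℝ) : ℂ) * f y * chirp α y

/-- Partial derivative in the k-th coordinate direction. -/
def partialD {n : ℕ} (k : Fin n) (g : Rn n → ℂ) (y : Rn n) : ℂ :=
  fderiv ℝ g y (EuclideanSpace.single k 1)

/-- `α` has no coordinate in `πℤ`. -/
def notPiZ {n : ℕ} (α : Rn n) : Prop := ∀ k, ∀ m : ℤ, α k ≠ m * π

namespace FrftAux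
variable {n : ℕ}

variable {n : ℕ}

lemma coord_le_norm (y : Rn n) (j : Fin n) : |y j| ≤ ‖y‖ := by
  have := abs_real_inner_le_norm (EuclideanSpace.single j (1:ℝ)) y
  simpa [EuclideanSpace.inner_single_left, EuclideanSpace.norm_single] using this

/-- derivative of the real quadratic form -/
def Qd (α : Rn n) (y : Rn n) : Rn n →L[ℝ] ℝ :=
  ∑ j, (Real.cot (α j) * y j) • (EuclideanSpace.proj j : Rn n →L[ℝ] ℝ)

lemma hasFDerivAt_Q (α : Rn n) (y : Rn n) :
    HasFDerivAt (fun z : Rn n => (∑ k, Real.cot (α k) / 2 * (z k) ^ 2 : ℝ)) (Qd α y) y := by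
  apply HasFDerivAt.fun_sum
  intro j _
  have h1 : HasFDerivAt (fun z : Rn n => z j) (EuclideanSpace.proj (𝕜 := ℝ) j) y :=
    (EuclideanSpace.proj (𝕜 := ℝ) j).hasFDerivAt
  have h2 := (h1.mul h1).const_mul (Real.cot (α j) / 2)
  have h3 : HasFDerivAt (fun z : Rn n => Real.cot (α j) / 2 * (z j * z j))
      ((Real.cot (α j) * y j) • EuclideanSpace.proj (𝕜 := ℝ) j) y := by
    refine h2.congr_fderiv ?_
    ext v
    simp [PiLp.proj_apply]
    ring
  refine h3.congr_of_eventuallyEq (Eventually.of_forall fun z => ?_)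
  ring

def chirpD (α : Rn n) (y : Rn n) : Rn n →L[ℝ] ℂ :=
  (2 * (π:ℂ) * Complex.I * chirp α y) • (Complex.ofRealCLM.comp (Qd α y))

lemma hasFDerivAt_chirp (α : Rn n) (y : Rn n) :
    HasFDerivAt (chirp α) (chirpD α y) y := by
  have h1 : HasFDerivAt (fun z : Rn n => ((∑ k, Real.cot (α k) / 2 * (z k) ^ 2 : ℝ) : ℂ))
      (Complex.ofRealCLM.comp (Qd α y)) y :=
    Complex.ofRealCLM.hasFDerivAt.comp y (hasFDerivAt_Q α y)
  have h2 := (h1.const_mul (2 * (π:ℂ) * Complex.I)).cexp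
  refine h2.congr_fderiv ?_
  unfold chirpD chirp
  rw [smul_smul]
  congr 1
  ring

lemma norm_chirp (α : Rn n) (y : Rn n) : ‖chirp α y‖ = 1 := by
  unfold chirp
  have h : (2 * (π:ℂ) * Complex.I * ((∑ k, Real.cot (α k) / 2 * (y k) ^ 2 : ℝ) : ℂ))
      = ((2 * π * (∑ k, Real.cot (α k) / 2 * (y k) ^ 2) : ℝ) : ℂ) * Complex.I := by
    push_cast; ring
  rw [h, Complex.norm_exp_ofReal_mul_I]

lemma norm_chirpD_le (α : Rn n) (y : Rn n) :
    ‖chirpD α y‖ ≤ (2 * π * ∑ j, |Real.cot (α j)|) * ‖y‖ := by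
  unfold chirpD
  apply ContinuousLinearMap.opNorm_le_bound
  · positivity
  intro v
  rw [ContinuousLinearMap.smul_apply, norm_smul]
  have h1 : ‖2 * (π:ℂ) * Complex.I * chirp α y‖ = 2 * π := by
    rw [norm_mul, norm_chirp]
    simp [norm_mul, abs_of_nonneg pi_nonneg]
  rw [h1]
  have h2 : ‖(Complex.ofRealCLM.comp (Qd α y)) v‖ ≤ (∑ j, |Real.cot (α j)|) * ‖y‖ * ‖v‖ := by
    simp only [ContinuousLinearMap.comp_apply, Complex.ofRealCLM_apply, Complex.norm_real]
    unfold Qd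
    simp only [ContinuousLinearMap.sum_apply, ContinuousLinearMap.smul_apply,
      PiLp.proj_apply, smul_eq_mul]
    calc ‖∑ j, Real.cot (α j) * y j * v j‖ ≤ ∑ j, ‖Real.cot (α j) * y j * v j‖ :=
          norm_sum_le _ _
    _ ≤ ∑ j, |Real.cot (α j)| * ‖y‖ * ‖v‖ := by
        apply Finset.sum_le_sum
        intro j _
        rw [Real.norm_eq_abs, abs_mul, abs_mul]
        gcongr
        · exact coord_le_norm y j
        · exact coord_le_norm v j
    _ = (∑ j, |Real.cot (α j)|) * ‖y‖ * ‖v‖ := by rw [← Finset.sum_mul, ← Finset.sum_mul]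
  calc 2 * π * ‖(Complex.ofRealCLM.comp (Qd α y)) v‖
      ≤ 2 * π * ((∑ j, |Real.cot (α j)|) * ‖y‖ * ‖v‖) := by gcongr
  _ = (2 * π * ∑ j, |Real.cot (α j)|) * ‖y‖ * ‖v‖ := by ring


variable {n : ℕ}




def hD (α : Rn n) (f : 𝓢(Rn n, ℂ)) (y : Rn n) : Rn n →L[ℝ] ℂ :=
  chirp α y • fderiv ℝ f y + f y • chirpD α y

lemma hasFDerivAt_h (α : Rn n) (f : 𝓢(Rn n, ℂ)) (y : Rn n) :
    HasFDerivAt (fun z => chirp α z * f z) (hD α f y) y :=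
  (hasFDerivAt_chirp α y).mul (f.differentiableAt.hasFDerivAt)

lemma fderiv_h (α : Rn n) (f : 𝓢(Rn n, ℂ)) :
    fderiv ℝ (fun z => chirp α z * f z) = hD α f := by
  ext1 y
  exact (hasFDerivAt_h α f y).fderiv

lemma continuous_chirp (α : Rn n) : Continuous (chirp α) :=
  continuous_iff_continuousAt.2 fun y => (hasFDerivAt_chirp α y).continuousAt

lemma continuous_Qd (α : Rn n) : Continuous (Qd α) := by
  unfold Qd
  apply continuous_finset_sum
  intro j _
  exact (continuous_const.mul ((EuclideanSpace.proj (𝕜 := ℝ) j).continuous)).smul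
    continuous_const

lemma continuous_chirpD (α : Rn n) : Continuous (chirpD α) := by
  unfold chirpD
  apply Continuous.fun_smul
  · exact continuous_const.mul (continuous_chirp α)
  · exact (ContinuousLinearMap.compSL (Rn n) ℝ ℂ (RingHom.id ℝ) (RingHom.id ℝ)
      Complex.ofRealCLM).continuous.comp (continuous_Qd α)

lemma continuous_hD (α : Rn n) (f : 𝓢(Rn n, ℂ)) : Continuous (hD α f) := by
  unfold hD
  exact ((continuous_chirp α).smul (SchwartzMap.fderivCLM ℝ (Rn n) ℂ f).continuous).add
    (f.continuous.smul (continuous_chirpD α))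

lemma integrable_h (α : Rn n) (f : 𝓢(Rn n, ℂ)) :
    Integrable (fun y => chirp α y * f y) := by
  apply ((f.integrable (μ := volume)).norm).mono'
    (((continuous_chirp α).mul f.continuous).aestronglyMeasurable)
  filter_upwards with y
  rw [Pi.mul_apply, norm_mul, norm_chirp, one_mul]

lemma integrable_hD (α : Rn n) (f : 𝓢(Rn n, ℂ)) : Integrable (hD α f) := by
  have h1 : Integrable (fun y => fderiv ℝ (⇑f) y) volume :=
    (SchwartzMap.fderivCLM ℝ (Rn n) ℂ f).integrable
  have h2 : Integrable (fun y : Rn n => (2 * π * ∑ j, |Real.cot (α j)|) * (‖y‖ * ‖f y‖))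
      volume := by
    apply Integrable.const_mul
    simpa using f.integrable_pow_mul (μ := volume) 1
  apply (h1.norm.add h2).mono' (continuous_hD α f).aestronglyMeasurable
  filter_upwards with y
  unfold hD
  apply (norm_add_le _ _).trans
  have e1 : ‖chirp α y • fderiv ℝ (⇑f) y‖ = ‖fderiv ℝ (⇑f) y‖ := by
    rw [norm_smul (chirp α y) (fderiv ℝ (⇑f) y), norm_chirp, one_mul]
  have e2 : ‖f y • chirpD α y‖ ≤ (2 * π * ∑ j, |Real.cot (α j)|) * (‖y‖ * ‖f y‖) := by
    rw [norm_smul (f y) (chirpD α y)]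
    calc ‖f y‖ * ‖chirpD α y‖ ≤ ‖f y‖ * ((2 * π * ∑ j, |Real.cot (α j)|) * ‖y‖) := by
          gcongr
          exact norm_chirpD_le α y
    _ = (2 * π * ∑ j, |Real.cot (α j)|) * (‖y‖ * ‖f y‖) := by ring
  rw [e1]
  simp only [Pi.add_apply]
  exact add_le_add le_rfl e2


variable {n : ℕ}

lemma tilde_apply (α u : Rn n) (j : Fin n) : tilde α u j = u j / Real.sin (α j) := rfl

lemma kernel_eq (α : Rn n) (y u : Rn n) :
    frftKernel α y u = cConst α * chirp α u *
      (Complex.exp (((-2 * π * (inner ℝ y (tilde α u) : ℝ) : ℝ) : ℂ) * Complex.I) *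
        chirp α y) := by
  unfold frftKernel cConst chirp
  rw [Finset.prod_mul_distrib, ← Complex.exp_sum,
    mul_assoc (∏ k, (1 - Complex.I * (Real.cot (α k) : ℂ)) ^ ((1:ℂ)/2)),
    ← Complex.exp_add, ← Complex.exp_add]
  congr 1
  have hinner : (inner ℝ y (tilde α u) : ℝ) = ∑ j, y j * (u j / Real.sin (α j)) := by
    simp [PiLp.inner_apply, tilde_apply, RCLike.inner_apply]
    exact Finset.sum_congr rfl fun j _ => mul_comm _ _
  congr 1
  rw [hinner]
  push_cast
  simp only [Finset.mul_sum, Finset.sum_mul]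
  rw [← Finset.sum_add_distrib, ← Finset.sum_add_distrib]
  exact Finset.sum_congr rfl fun j _ => by ring

lemma key (α : Rn n) (g : Rn n → ℂ) (x : Rn n) :
    frft α g x = cConst α * chirp α x * 𝓕 (fun y => chirp α y * g y) (tilde α x) := by
  unfold frft
  rw [Real.fourier_eq']
  rw [← integral_const_mul]
  congr 1
  ext y
  rw [kernel_eq α y x]
  simp only [smul_eq_mul]
  ring

lemma chirp_neg_mul (α : Rn n) (y : Rn n) : chirp α y * chirp (-α) y = 1 := by
  unfold chirp
  rw [← Complex.exp_add, ← Complex.exp_zero]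
  congr 1
  have h : (∑ k, Real.cot ((-α : Rn n) k) / 2 * (y k) ^ 2) =
      -∑ k, Real.cot (α k) / 2 * (y k) ^ 2 := by
    rw [← Finset.sum_neg_distrib]
    apply Finset.sum_congr rfl
    intro j _
    have h2 : (-α : Rn n) j = -(α j) := rfl
    rw [h2, Real.cot_eq_cos_div_sin, Real.cos_neg, Real.sin_neg, div_neg,
      ← Real.cot_eq_cos_div_sin]
    ring
  rw [h]
  push_cast
  ring

lemma fourier_step (α : Rn n) (f : 𝓢(Rn n, ℂ)) (k : Fin n) (ξ : Rn n)
    (hint : Integrable (fun y => chirp α y * f y))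
    (hdiff : Differentiable ℝ (fun y => chirp α y * f y))
    (hint' : Integrable (fderiv ℝ (fun y => chirp α y * f y))) :
    𝓕 (fun y => partialD k (fun z => chirp α z * f z) y) ξ
      = 2 * (π:ℂ) * Complex.I * (ξ k : ℂ) * 𝓕 (fun y => chirp α y * f y) ξ := by
  have h1 := Real.fourier_fderiv hint hdiff hint'
  have h2 : 𝓕 (fun y => partialD k (fun z => chirp α z * f z) y) ξ
      = (𝓕 (fderiv ℝ (fun y => chirp α y * f y)) ξ) (EuclideanSpace.single k 1) := by
    rw [Real.fourier_continuousLinearMap_apply hint']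
    rfl
  rw [h2, h1]
  rw [VectorFourier.fourierSMulRight_apply]
  simp only [ContinuousLinearMap.neg_apply, innerSL_apply_apply ℝ]
  have : (inner ℝ ξ (EuclideanSpace.single k (1:ℝ)) : ℝ) = ξ k := by
    simp [EuclideanSpace.inner_single_right]
  rw [this]
  simp only [neg_smul, Complex.real_smul, smul_eq_mul, neg_mul, neg_neg]
  push_cast
  ring


end FrftAux

open FrftAux in
/-- FRFT derivative formula. -/
theorem frft_derivative {n : ℕ} (α : Rn n) (hα : notPiZ α) (f : 𝓢(Rn n, ℂ))
    (k : Fin n) (x : Rn n) :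
    frft α (fun y => chirp (-α) y * partialD k (fun z => chirp α z * f z) y) x
      = 2 * (π : ℂ) * Complex.I * ((x k / Real.sin (α k) : ℝ) : ℂ) * frft α (⇑f) x := by
  have hint := integrable_h α f
  have hdiff : Differentiable ℝ (fun y => chirp α y * f y) :=
    fun y => (hasFDerivAt_h α f y).differentiableAt
  have hint' : Integrable (fderiv ℝ (fun y => chirp α y * f y)) := by
    rw [fderiv_h]; exact integrable_hD α f
  have hstep := fourier_step α f k (tilde α x) hint hdiff hint'
  rw [key α _ x, key α (⇑f) x]
  have hL : (fun y => chirp α y *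
        (chirp (-α) y * partialD k (fun z => chirp α z * f z) y))
      = fun y => partialD k (fun z => chirp α z * f z) y := by
    funext y
    rw [← mul_assoc, chirp_neg_mul, one_mul]
  have hmain : 𝓕 (fun y => chirp α y *
        (fun y => chirp (-α) y * partialD k (fun z => chirp α z * f z) y) y) (tilde α x)
      = 2 * (π:ℂ) * Complex.I * ((tilde α x k : ℝ) : ℂ) *
        𝓕 (fun y => chirp α y * f y) (tilde α x) := by
    simp only []
    rw [hL, hstep]
  rw [hmain]
  have hk : tilde α x k = x k / Real.sin (α k) := rfl
  rw [hk]
  ring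
end
end

section
/- (Multi-index FRFT derivative formula) Let α ∈ ℝⁿ with no coordinate in πℤ and ς ∈ ℤ₊ⁿ a multi-index. For any Schwartz function f and x ∈ ℝⁿ, F_α(e_{-α}(y) ∂^ς[e_α(y)f(y)])(x) = (2πi x̃)^ς F_α(f)(x), where x̃ = (x₁ csc α₁,...,xₙ csc αₙ) and (2πi x̃)^ς = ∏ₖ (2πi x̃ₖ)^{ςₖ}. -/
open MeasureTheory Real SchwartzMap Filter
open scoped FourierTransform

noncomputable section

/-- Iterated multi-index partial derivative `∂^ς`. -/
def multiPartial {n : ℕ} (ς : Fin n → ℕ) (g : Rn n → ℂ) : Rn n → ℂ :=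
  (List.finRange n).foldr (fun k h => (partialD k)^[ς k] h) g


namespace FRFTAux

open Complex ContinuousLinearMap
open scoped RealInnerProductSpace

variable {n : ℕ}

lemma proj_apply (k : Fin n) (x : Rn n) : EuclideanSpace.proj (𝕜 := ℝ) k x = x k := rfl

lemma cot_neg' (a : ℝ) : Real.cot (-a) = -Real.cot a := by
  rw [Real.cot_eq_cos_div_sin, Real.cot_eq_cos_div_sin, Real.cos_neg, Real.sin_neg, div_neg]

lemma tilde_apply (α u : Rn n) (k : Fin n) : tilde α u k = u k / Real.sin (α k) := rfl

/-- The linear-in-`x` CLM `A x v = 2πI Σ cot(αₖ) xₖ vₖ`, derivative data of the chirp phase. -/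
def AC (α : Rn n) : Rn n →L[ℝ] (Rn n →L[ℝ] ℂ) :=
  ∑ k, (EuclideanSpace.proj (𝕜 := ℝ) k).smulRight
    ((2 * (π : ℂ) * Complex.I * (Real.cot (α k) : ℂ)) •
      ((EuclideanSpace.proj (𝕜 := ℝ) k).smulRight (1 : ℂ)))

lemma AC_apply (α : Rn n) (x v : Rn n) :
    AC α x v = 2 * (π : ℂ) * Complex.I *
      ((∑ k, Real.cot (α k) * x k * v k : ℝ) : ℂ) := by
  simp only [AC, ContinuousLinearMap.sum_apply, ContinuousLinearMap.smulRight_apply,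
    ContinuousLinearMap.smul_apply, smul_eq_mul, proj_apply, Complex.real_smul]
  push_cast
  rw [Finset.mul_sum]
  refine Finset.sum_congr rfl fun k _ => ?_
  ring

lemma hasFDerivAt_Q (α : Rn n) (x : Rn n) :
    HasFDerivAt (fun y : Rn n => (∑ k, Real.cot (α k) / 2 * (y k) ^ 2 : ℝ))
      (∑ k, (Real.cot (α k) * x k) • (EuclideanSpace.proj (𝕜 := ℝ) k)) x := by
  refine HasFDerivAt.fun_sum fun k _ => ?_
  have h1 : HasFDerivAt (fun y : Rn n => y k) (EuclideanSpace.proj (𝕜 := ℝ) k) x :=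
    (EuclideanSpace.proj (𝕜 := ℝ) k).hasFDerivAt
  have h2 := (h1.mul h1).const_mul (Real.cot (α k) / 2)
  simp only [sq]
  refine h2.congr_fderiv ?_
  ext v
  simp only [ContinuousLinearMap.smul_apply, ContinuousLinearMap.add_apply, proj_apply,
    smul_eq_mul]
  ring

lemma hasFDerivAt_chirp (α : Rn n) (x : Rn n) :
    HasFDerivAt (chirp α) (chirp α x • AC α x) x := by
  have h0 := hasFDerivAt_Q α x
  have h1 : HasFDerivAt (fun y : Rn n => ((∑ k, Real.cot (α k) / 2 * (y k) ^ 2 : ℝ) : ℂ))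
      (Complex.ofRealCLM.comp (∑ k, (Real.cot (α k) * x k) • (EuclideanSpace.proj (𝕜 := ℝ) k))) x :=
    Complex.ofRealCLM.hasFDerivAt.comp x h0
  have h2 := h1.const_mul (2 * (π : ℂ) * Complex.I)
  have h3 := h2.cexp
  refine h3.congr_fderiv ?_
  congr 1
  ext v
  rw [AC_apply]
  simp only [ContinuousLinearMap.smul_apply, ContinuousLinearMap.coe_comp', Function.comp_apply,
    ContinuousLinearMap.sum_apply, ContinuousLinearMap.smul_apply, proj_apply,
    smul_eq_mul, Complex.ofRealCLM_apply, Complex.real_smul]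

lemma continuous_chirp (α : Rn n) : Continuous (chirp α) :=
  continuous_iff_continuousAt.2 fun x => (hasFDerivAt_chirp α x).continuousAt

lemma norm_chirp (α : Rn n) (x : Rn n) : ‖chirp α x‖ = 1 := by
  rw [chirp, show (2 * (π : ℂ) * Complex.I *
      ((∑ k, Real.cot (α k) / 2 * (x k) ^ 2 : ℝ) : ℂ))
    = (((2 * π * ∑ k, Real.cot (α k) / 2 * (x k) ^ 2 : ℝ)) : ℂ) * Complex.I by push_cast; ring]
  rw [Complex.norm_exp_ofReal_mul_I]

lemma chirp_neg_mul (α : Rn n) (y : Rn n) : chirp α y * chirp (-α) y = 1 := by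
  rw [chirp, chirp, ← Complex.exp_add, ← Complex.exp_zero]
  congr 1
  have h : (∑ k, Real.cot ((-α) k) / 2 * (y k) ^ 2 : ℝ)
      = -(∑ k, Real.cot (α k) / 2 * (y k) ^ 2 : ℝ) := by
    rw [← Finset.sum_neg_distrib]
    refine Finset.sum_congr rfl fun k _ => ?_
    have hk : (-α) k = -(α k) := rfl
    rw [hk, cot_neg']
    ring
  rw [h]
  push_cast
  ring

/-- The Schwartz-level "derivative of chirp·g divided by chirp" operator. -/
def Wmap (α : Rn n) : 𝓢(Rn n, ℂ) →L[ℝ] 𝓢(Rn n, Rn n →L[ℝ] ℂ) :=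
  fderivCLM ℝ (Rn n) ℂ + bilinLeftCLM
    (ContinuousLinearMap.lsmul ℝ ℂ : ℂ →L[ℝ] (Rn n →L[ℝ] ℂ) →L[ℝ] (Rn n →L[ℝ] ℂ))
    (AC α).hasTemperateGrowth

lemma Wmap_apply (α : Rn n) (g : 𝓢(Rn n, ℂ)) (x : Rn n) :
    Wmap α g x = fderiv ℝ g x + g x • AC α x := rfl

lemma hasFDerivAt_chirp_mul (α : Rn n) (g : 𝓢(Rn n, ℂ)) (x : Rn n) :
    HasFDerivAt (fun y => chirp α y * g y) (chirp α x • (Wmap α g x : Rn n →L[ℝ] ℂ)) x := by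
  have h := (hasFDerivAt_chirp α x).mul (g.differentiableAt.hasFDerivAt)
  refine h.congr_fderiv ?_
  rw [Wmap_apply, smul_add]
  rw [smul_comm (chirp α x) (g x)]

lemma fderiv_chirp_mul (α : Rn n) (g : 𝓢(Rn n, ℂ)) :
    fderiv ℝ (fun y => chirp α y * g y) = fun x => chirp α x • (Wmap α g x : Rn n →L[ℝ] ℂ) :=
  funext fun x => (hasFDerivAt_chirp_mul α g x).fderiv

lemma integrable_chirp_smul {V : Type*} [NormedAddCommGroup V] [NormedSpace ℂ V]
    [NormedSpace ℝ V] (α : Rn n) (h : 𝓢(Rn n, V)) :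
    Integrable (fun x => chirp α x • h x) := by
  refine (h.integrable (μ := volume)).norm.mono'
    (((continuous_chirp α).smul h.continuous).aestronglyMeasurable) ?_
  filter_upwards with x
  rw [norm_smul, norm_chirp, one_mul]

/-- The Schwartz operator `T_k` with `∂_k (chirp·g) = chirp·(T_k g)`. -/
def Tk (α : Rn n) (k : Fin n) : 𝓢(Rn n, ℂ) →L[ℝ] 𝓢(Rn n, ℂ) :=
  (SchwartzMap.evalCLM ℝ (Rn n) ℂ (EuclideanSpace.single k 1)).comp (Wmap α)

lemma Tk_apply (α : Rn n) (k : Fin n) (g : 𝓢(Rn n, ℂ)) (x : Rn n) :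
    Tk α k g x = Wmap α g x (EuclideanSpace.single k 1) := rfl

lemma partialD_chirp_mul (α : Rn n) (k : Fin n) (g : 𝓢(Rn n, ℂ)) :
    partialD k (fun y => chirp α y * g y) = fun y => chirp α y * (Tk α k g) y := by
  funext x
  rw [partialD, (hasFDerivAt_chirp_mul α g x).fderiv]
  rw [ContinuousLinearMap.smul_apply, Tk_apply, smul_eq_mul]

lemma fourier_partialD (α : Rn n) (k : Fin n) (g : 𝓢(Rn n, ℂ)) (ξ : Rn n) :
    𝓕 (fun y => chirp α y * (Tk α k g) y) ξ
      = (2 * (π : ℂ) * Complex.I * (ξ k)) * 𝓕 (fun y => chirp α y * g y) ξ := by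
  rw [← partialD_chirp_mul]
  set F := fun y => chirp α y * g y with hF
  have hFi : Integrable F := by
    have := integrable_chirp_smul α g
    simpa only [smul_eq_mul] using this
  have hFd : Differentiable ℝ F := fun x => (hasFDerivAt_chirp_mul α g x).differentiableAt
  have hF' : Integrable (fderiv ℝ F) := by
    rw [hF, fderiv_chirp_mul]
    exact integrable_chirp_smul α (Wmap α g)
  have h1 : partialD k F = fun y => fderiv ℝ F y (EuclideanSpace.single k 1) := rfl
  rw [h1]
  have h2 := Real.fourier_continuousLinearMap_apply
    (a := EuclideanSpace.single k 1) (v := ξ) hF'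
  rw [← h2, Real.fourier_fderiv hFi hFd hF']
  rw [VectorFourier.fourierSMulRight_apply]
  simp only [ContinuousLinearMap.neg_apply, innerSL_apply_apply ℝ, smul_eq_mul,
    EuclideanSpace.inner_single_right, RCLike.star_def, conj_trivial, one_mul,
    Complex.real_smul]
  push_cast
  ring

lemma iter_chirp_mul (α : Rn n) (k : Fin n) (m : ℕ) (g : 𝓢(Rn n, ℂ)) :
    (partialD k)^[m] (fun y => chirp α y * g y)
      = fun y => chirp α y * ((Tk α k)^[m] g) y := by
  induction m generalizing g with
  | zero => rfl
  | succ m ih =>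
      rw [Function.iterate_succ_apply', Function.iterate_succ_apply', ih,
        partialD_chirp_mul]

lemma fourier_iter (α : Rn n) (k : Fin n) (m : ℕ) (g : 𝓢(Rn n, ℂ)) (ξ : Rn n) :
    𝓕 (fun y => chirp α y * ((Tk α k)^[m] g) y) ξ
      = (2 * (π : ℂ) * Complex.I * (ξ k)) ^ m * 𝓕 (fun y => chirp α y * g y) ξ := by
  induction m generalizing g with
  | zero => simp
  | succ m ih =>
      rw [Function.iterate_succ_apply', fourier_partialD, ih, pow_succ]
      ring

lemma foldr_chirp_mul (α : Rn n) (ς : Fin n → ℕ) :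
    ∀ (l : List (Fin n)) (g : 𝓢(Rn n, ℂ)),
      l.foldr (fun k h => (partialD k)^[ς k] h) (fun y => chirp α y * g y)
        = fun y => chirp α y * (l.foldr (fun k h => (Tk α k)^[ς k] h) g) y := by
  intro l
  induction l with
  | nil => intro g; rfl
  | cons k l ih =>
      intro g
      simp only [List.foldr_cons, ih, iter_chirp_mul]

lemma fourier_foldr (α : Rn n) (ς : Fin n → ℕ) (ξ : Rn n) :
    ∀ (l : List (Fin n)) (g : 𝓢(Rn n, ℂ)),
      𝓕 (fun y => chirp α y * (l.foldr (fun k h => (Tk α k)^[ς k] h) g) y) ξ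
        = (l.map fun k => (2 * (π : ℂ) * Complex.I * (ξ k)) ^ ς k).prod
            * 𝓕 (fun y => chirp α y * g y) ξ := by
  intro l
  induction l with
  | nil => intro g; simp
  | cons k l ih =>
      intro g
      rw [List.foldr_cons, fourier_iter, ih, List.map_cons, List.prod_cons]
      ring

lemma frftKernel_eq (α : Rn n) (y x : Rn n) :
    frftKernel α y x = cConst α * chirp α x *
      (chirp α y * Complex.exp (((-2 * π * (inner ℝ y (tilde α x) : ℝ)) : ℂ) * Complex.I)) := by
  rw [frftKernel, Finset.prod_mul_distrib, cConst]
  rw [mul_assoc, mul_assoc]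
  congr 1
  rw [← Complex.exp_sum, chirp, chirp, ← Complex.exp_add, ← Complex.exp_add]
  congr 1
  have hsum : (∑ k, (Real.cot (α k) / 2 * ((y k) ^ 2 + (x k) ^ 2) - y k * x k / Real.sin (α k)))
      = (∑ k, Real.cot (α k) / 2 * (x k) ^ 2) + (∑ k, Real.cot (α k) / 2 * (y k) ^ 2)
        - (inner ℝ y (tilde α x) : ℝ) := by
    rw [PiLp.inner_apply]
    simp only [RCLike.inner_apply, conj_trivial, tilde_apply]
    rw [← Finset.sum_add_distrib, ← Finset.sum_sub_distrib]
    refine Finset.sum_congr rfl fun k _ => ?_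
    field_simp
    ring
  rw [← Finset.mul_sum, ← Complex.ofReal_sum, hsum]
  push_cast
  ring

lemma frft_eq (α : Rn n) (g : Rn n → ℂ) (x : Rn n) :
    frft α g x = cConst α * chirp α x * 𝓕 (fun y => chirp α y * g y) (tilde α x) := by
  rw [frft, Real.fourier_eq', ← MeasureTheory.integral_const_mul]
  congr 1
  funext y
  rw [frftKernel_eq]
  simp only [smul_eq_mul]
  push_cast
  ring

end FRFTAux

/-- multi-index FRFT derivative formula. -/
theorem frft_multi_derivative {n : ℕ} (α : Rn n) (hα : notPiZ α) (ς : Fin n → ℕ)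
    (f : 𝓢(Rn n, ℂ)) (x : Rn n) :
    frft α (fun y => chirp (-α) y * multiPartial ς (fun z => chirp α z * f z) y) x
      = (∏ k, (2 * (π : ℂ) * Complex.I * ((x k / Real.sin (α k) : ℝ) : ℂ)) ^ ς k) *
          frft α (⇑f) x := by
  rw [FRFTAux.frft_eq, FRFTAux.frft_eq]
  set G := (List.finRange n).foldr (fun k h => (FRFTAux.Tk α k)^[ς k] h) f with hG
  have hmp : multiPartial ς (fun z => chirp α z * f z) = fun y => chirp α y * G y := by
    rw [multiPartial, hG]
    exact FRFTAux.foldr_chirp_mul α ς (List.finRange n) f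
  have hfun : (fun y => chirp α y *
        (chirp (-α) y * multiPartial ς (fun z => chirp α z * f z) y))
      = fun y => chirp α y * G y := by
    funext y
    rw [hmp]
    rw [show chirp α y * (chirp (-α) y * (chirp α y * G y))
        = (chirp α y * chirp (-α) y) * (chirp α y * G y) from by ring,
      FRFTAux.chirp_neg_mul, one_mul]
  rw [hfun, hG, FRFTAux.fourier_foldr α ς (tilde α x) (List.finRange n) f,
    ← Fin.prod_univ_def]
  rw [show (∏ k, (2 * (π : ℂ) * Complex.I * ((x k / Real.sin (α k) : ℝ) : ℂ)) ^ ς k)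
      = ∏ k, (2 * (π : ℂ) * Complex.I * (((tilde α x) k : ℝ) : ℂ)) ^ ς k from rfl]
  ring
end
end

section
/- Let α ∈ ℝⁿ with no coordinate in πℤ. For any Schwartz function f and x ∈ ℝⁿ, F_α(-e_{-α} Δ[e_α f])(x) = 4π² |x̃|² F_α(f)(x), where Δ is the Laplacian and x̃ = (x₁ csc α₁,...,xₙ csc αₙ). -/
open MeasureTheory Real SchwartzMap Filter
open scoped FourierTransform

noncomputable section

open scoped RealInnerProductSpace

section Aux

lemma iteratedDeriv_cexp_mul (c : ℂ) (i : ℕ) :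
    iteratedDeriv i (fun t : ℝ => Complex.exp (c * t)) =
    (fun t : ℝ => (c : ℂ) ^ i * Complex.exp (c * t)) := by
  induction i with
  | zero => simp
  | succ i ih =>
    rw [iteratedDeriv_succ, ih]
    funext t
    have h0 : HasDerivAt (fun t : ℝ => (t : ℂ)) 1 t := by
      simpa using (hasDerivAt_id t).ofReal_comp
    have h1 : HasDerivAt (fun t : ℝ => Complex.exp (c * t)) (Complex.exp (c * t) * (c * 1)) t :=
      (h0.const_mul c).cexp
    rw [deriv_const_mul _ h1.differentiableAt, h1.deriv]
    ring

lemma sqBound (c : ℝ) : ∀ i : ℕ, 1 ≤ i → ∀ t : ℝ,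
    ‖iteratedDeriv i (fun s : ℝ => c * s ^ 2) t‖ ≤ (2 * |c|) * (1 + |t|) ^ i := by
  have d1 : deriv (fun s : ℝ => c * s ^ 2) = fun s : ℝ => c * (2 * s) := by
    funext s; rw [deriv_const_mul_field]; simp
  have d2 : deriv (fun s : ℝ => c * (2 * s)) = fun _ : ℝ => c * 2 := by
    have e : (fun s : ℝ => c * (2 * s)) = fun s : ℝ => (c * 2) * s := by funext s; ring
    funext s; rw [e, deriv_const_mul_field]; simp
  have d3 : deriv (fun _ : ℝ => c * 2) = fun _ : ℝ => 0 := by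
    funext s; simp
  intro i hi t
  have ht : (0:ℝ) ≤ |t| := abs_nonneg t
  have hc : (0:ℝ) ≤ |c| := abs_nonneg c
  match i, hi with
  | 1, _ =>
    rw [iteratedDeriv_one, d1]
    rw [Real.norm_eq_abs, abs_mul, abs_mul]
    simp only [pow_one, abs_two]
    nlinarith
  | 2, _ =>
    rw [iteratedDeriv_succ', d1, iteratedDeriv_one, d2]
    rw [Real.norm_eq_abs, abs_mul, abs_two]
    nlinarith [sq_nonneg |t|]
  | (m+3), _ =>
    rw [iteratedDeriv_succ', d1, iteratedDeriv_succ', d2, iteratedDeriv_succ', d3]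
    have hz : iteratedDeriv m (fun _ : ℝ => (0:ℝ)) t = 0 := by
      rw [iteratedDeriv_eq_iterate,
        Function.iterate_fixed (by funext s; simp : deriv (fun _ : ℝ => (0:ℝ)) = fun _ => 0)]
    rw [hz, norm_zero]
    positivity

lemma abs_apply_le_norm {n : ℕ} (x : Rn n) (k : Fin n) : |x k| ≤ ‖x‖ := by
  have h : x k ^ 2 ≤ ∑ i, x i ^ 2 :=
    Finset.single_le_sum (f := fun i => x i ^ 2) (fun i _ => sq_nonneg _) (Finset.mem_univ k)
  calc |x k| = Real.sqrt (x k ^ 2) := (Real.sqrt_sq_eq_abs _).symm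
    _ ≤ Real.sqrt (∑ i, x i ^ 2) := Real.sqrt_le_sqrt h
    _ = ‖x‖ := by rw [EuclideanSpace.norm_eq]; congr 1; simp [Real.norm_eq_abs, sq_abs]

lemma norm_proj_le {n : ℕ} (k : Fin n) : ‖(EuclideanSpace.proj k : Rn n →L[ℝ] ℝ)‖ ≤ 1 := by
  apply ContinuousLinearMap.opNorm_le_bound _ zero_le_one
  intro y
  rw [one_mul]
  simpa [Real.norm_eq_abs] using abs_apply_le_norm y k

lemma chirp_hasTemperateGrowth {n : ℕ} (α : Rn n) :
    Function.HasTemperateGrowth (chirp α) := by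
  set c : ℂ := 2 * (π : ℂ) * Complex.I with hc
  set g : ℝ → ℂ := fun t : ℝ => Complex.exp (c * t) with hg
  set q : Rn n → ℝ := fun y => ∑ k, Real.cot (α k) / 2 * (y k) ^ 2 with hq
  have hqcd : ContDiff ℝ ((⊤:ℕ∞) : WithTop ℕ∞) q := by
    apply ContDiff.sum; intro k _
    exact contDiff_const.mul ((EuclideanSpace.proj (𝕜 := ℝ) k).contDiff.pow 2)
  have hgcd : ContDiff ℝ ((⊤:ℕ∞) : WithTop ℕ∞) g :=
    Complex.contDiff_exp.comp (contDiff_const.mul Complex.ofRealCLM.contDiff)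
  have hcomp : chirp α = g ∘ q := rfl
  set M : ℝ := 1 + ∑ k, |Real.cot (α k)| with hM
  have hsnn : (0:ℝ) ≤ ∑ k, |Real.cot (α k)| :=
    Finset.sum_nonneg fun k _ => abs_nonneg _
  have hM1 : (1:ℝ) ≤ M := by simp only [hM]; linarith
  refine ⟨hcomp ▸ hgcd.comp hqcd, fun N => ⟨N, N.factorial * (1+2*π)^N * M^N, fun x => ?_⟩⟩
  have hC : ∀ i, i ≤ N → ‖iteratedFDeriv ℝ i g (q x)‖ ≤ (1+2*π)^N := by
    intro i hi
    rw [norm_iteratedFDeriv_eq_norm_iteratedDeriv, hg, iteratedDeriv_cexp_mul]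
    have h1 : ‖c ^ i * Complex.exp (c * (q x : ℂ))‖ = (2*π)^i := by
      rw [norm_mul, norm_pow, Complex.norm_exp]
      have h2 : ‖c‖ = 2*π := by
        simp [hc, abs_of_pos Real.pi_pos]
      rw [h2]
      have h3 : (c * (q x : ℂ)).re = 0 := by simp [hc]
      rw [h3]
      simp
    rw [h1]
    calc (2*π)^i ≤ (1+2*π)^i := by
          apply pow_le_pow_left₀ (by positivity) (by linarith)
      _ ≤ (1+2*π)^N := by
          apply pow_le_pow_right₀ (by linarith [Real.pi_pos]) hi
  have hD : ∀ i, 1 ≤ i → i ≤ N → ‖iteratedFDeriv ℝ i q x‖ ≤ (M * (1+‖x‖))^i := by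
    intro i h1 _
    have hsum : iteratedFDeriv ℝ i q x
        = ∑ k, iteratedFDeriv ℝ i (fun y : Rn n => Real.cot (α k) / 2 * (y k) ^ 2) x := by
      rw [hq, iteratedFDeriv_sum (fun k _ =>
        (contDiff_const.mul ((EuclideanSpace.proj (𝕜 := ℝ) k).contDiff.pow 2)).of_le
          (by exact_mod_cast le_top))]
      simp
    rw [hsum]
    calc ‖∑ k, iteratedFDeriv ℝ i (fun y : Rn n => Real.cot (α k) / 2 * (y k) ^ 2) x‖
        ≤ ∑ k, ‖iteratedFDeriv ℝ i (fun y : Rn n => Real.cot (α k) / 2 * (y k) ^ 2) x‖ :=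
          norm_sum_le _ _
      _ ≤ ∑ k, |Real.cot (α k)| * (1+‖x‖)^i := by
          apply Finset.sum_le_sum
          intro k _
          have hcd : ContDiff ℝ ((⊤:ℕ∞) : WithTop ℕ∞)
              (fun t : ℝ => Real.cot (α k) / 2 * t ^ 2) := by fun_prop
          have hck : (fun y : Rn n => Real.cot (α k) / 2 * (y k) ^ 2)
              = (fun t : ℝ => Real.cot (α k) / 2 * t ^ 2) ∘ (EuclideanSpace.proj (𝕜 := ℝ) k) := rfl
          rw [hck, ContinuousLinearMap.iteratedFDeriv_comp_right _ hcd x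
            (by exact_mod_cast le_top)]
          apply le_trans (ContinuousMultilinearMap.norm_compContinuousLinearMap_le _ _)
          have hd : ‖iteratedFDeriv ℝ i (fun t : ℝ => Real.cot (α k) / 2 * t ^ 2)
              ((EuclideanSpace.proj (𝕜 := ℝ) k) x)‖ ≤ |Real.cot (α k)| * (1+|x k|)^i := by
            rw [norm_iteratedFDeriv_eq_norm_iteratedDeriv]
            have h5 := sqBound (Real.cot (α k) / 2) i h1 (x k)
            calc ‖iteratedDeriv i (fun s : ℝ => Real.cot (α k)/2 * s ^ 2) (x k)‖
                ≤ (2 * |Real.cot (α k)/2|) * (1 + |x k|)^i := h5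
              _ = |Real.cot (α k)| * (1 + |x k|)^i := by
                  rw [abs_div, abs_two]; ring
          calc ‖iteratedFDeriv ℝ i (fun t : ℝ => Real.cot (α k) / 2 * t ^ 2)
                ((EuclideanSpace.proj (𝕜 := ℝ) k) x)‖
                  * ∏ _j : Fin i, ‖(EuclideanSpace.proj (𝕜 := ℝ) k : Rn n →L[ℝ] ℝ)‖
              ≤ (|Real.cot (α k)| * (1+|x k|)^i) * 1 := by
                apply mul_le_mul hd ?_ ?_ (by positivity)
                · calc ∏ _j : Fin i, ‖(EuclideanSpace.proj (𝕜 := ℝ) k : Rn n →L[ℝ] ℝ)‖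
                      ≤ ∏ _j : Fin i, 1 := Finset.prod_le_prod (fun _ _ => norm_nonneg _)
                        (fun _ _ => norm_proj_le k)
                    _ = 1 := by simp
                · positivity
            _ ≤ |Real.cot (α k)| * (1+‖x‖)^i := by
                rw [mul_one]
                apply mul_le_mul_of_nonneg_left _ (abs_nonneg _)
                apply pow_le_pow_left₀ (by positivity)
                linarith [abs_apply_le_norm x k]
      _ = (∑ k, |Real.cot (α k)|) * (1+‖x‖)^i := by rw [← Finset.sum_mul]
      _ ≤ (M * (1+‖x‖))^i := by
          rw [mul_pow]
          apply mul_le_mul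
          · calc (∑ k, |Real.cot (α k)|) ≤ M := by simp only [hM]; linarith
              _ ≤ M^i := le_self_pow₀ (by linarith) (by omega)
          · exact le_refl _
          · positivity
          · positivity
  have main := norm_iteratedFDeriv_comp_le hgcd hqcd
    (by exact_mod_cast le_top : (N : WithTop ℕ∞) ≤ ((⊤:ℕ∞) : WithTop ℕ∞)) x hC hD
  rw [← hcomp] at main
  calc ‖iteratedFDeriv ℝ N (chirp α) x‖ ≤ N.factorial * (1+2*π)^N * (M * (1+‖x‖))^N := main
    _ = N.factorial * (1+2*π)^N * M^N * (1+‖x‖)^N := by rw [mul_pow]; ring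

def chirpSMul {n : ℕ} (α : Rn n) (f : 𝓢(Rn n, ℂ)) : 𝓢(Rn n, ℂ) :=
  SchwartzMap.bilinLeftCLM (ContinuousLinearMap.mul ℝ ℂ) (chirp_hasTemperateGrowth α) f

lemma chirpSMul_apply {n : ℕ} (α : Rn n) (f : 𝓢(Rn n, ℂ)) (y : Rn n) :
    chirpSMul α f y = f y * chirp α y := rfl

lemma tilde_apply {n : ℕ} (α u : Rn n) (k : Fin n) :
    tilde α u k = u k / Real.sin (α k) := rfl

lemma inner_tilde {n : ℕ} (α x y : Rn n) :
    ⟪y, tilde α x⟫ = ∑ k, y k * (x k / Real.sin (α k)) := by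
  rw [PiLp.inner_apply]
  simp [tilde_apply, RCLike.inner_apply]
  exact Finset.sum_congr rfl fun _ _ => mul_comm _ _

lemma fourier_pderiv {n : ℕ} (h : 𝓢(Rn n, ℂ)) (j : Fin n) (ξ : Rn n) :
    𝓕 (fun y => fderiv ℝ (⇑h) y (EuclideanSpace.single j (1:ℝ))) ξ
      = (2 * (π:ℂ) * Complex.I * (ξ j : ℂ)) * 𝓕 (⇑h) ξ := by
  have hcoe : ⇑(SchwartzMap.fderivCLM ℝ (Rn n) ℂ h) = fderiv ℝ (⇑h) := by
    funext y; exact SchwartzMap.fderivCLM_apply ℝ h y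
  have hi : Integrable (fderiv ℝ (⇑h)) volume := by
    rw [← hcoe]; exact (SchwartzMap.fderivCLM ℝ (Rn n) ℂ h).integrable
  rw [← Real.fourier_continuousLinearMap_apply hi,
    Real.fourier_fderiv h.integrable h.differentiable hi,
    VectorFourier.fourierSMulRight_apply]
  have h4 : ((-innerSL ℝ) ξ) (EuclideanSpace.single j (1:ℝ)) = -(ξ j) := by
    simp [EuclideanSpace.inner_single_right]
  rw [h4]
  simp only [neg_smul, smul_neg, neg_neg, Complex.real_smul, smul_eq_mul]
  ring

lemma frftKernel_eq {n : ℕ} (α : Rn n) (y x : Rn n) :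
    frftKernel α y x = cConst α * chirp α y * chirp α x *
      Complex.exp (-(2 * (π:ℂ) * Complex.I) * ((⟪y, tilde α x⟫ : ℝ) : ℂ)) := by
  unfold frftKernel cConst chirp
  rw [Finset.prod_mul_distrib, ← Complex.exp_sum]
  conv_rhs => rw [mul_assoc, mul_assoc, ← Complex.exp_add, ← Complex.exp_add]
  congr 1
  rw [inner_tilde]
  push_cast
  rw [Finset.mul_sum, Finset.mul_sum, Finset.mul_sum, ← Finset.sum_add_distrib,
    ← Finset.sum_add_distrib]
  congr 1
  apply Finset.sum_congr rfl
  intro k _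
  push_cast
  ring

lemma frft_eq {n : ℕ} (α : Rn n) (g : Rn n → ℂ) (x : Rn n) :
    frft α g x = cConst α * chirp α x * 𝓕 (fun y => chirp α y * g y) (tilde α x) := by
  have hpt : ∀ y, g y * frftKernel α y x
      = cConst α * chirp α x * ((𝐞 (-⟪y, tilde α x⟫) : Circle) • (chirp α y * g y)) := by
    intro y
    rw [frftKernel_eq, Circle.smul_def, Real.fourierChar_apply]
    have he : Complex.exp (↑(2 * π * -⟪y, tilde α x⟫) * Complex.I)
        = Complex.exp (-(2 * (π:ℂ) * Complex.I) * ((⟪y, tilde α x⟫ : ℝ) : ℂ)) := by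
      congr 1; push_cast; ring
    rw [he, smul_eq_mul]
    ring
  rw [frft, Real.fourier_eq]
  simp only [hpt]
  rw [integral_const_mul]

lemma chirp_mul_neg {n : ℕ} (α : Rn n) (y : Rn n) : chirp α y * chirp (-α) y = 1 := by
  unfold chirp
  rw [← Complex.exp_add]
  have hz : (∑ k, Real.cot (α k) / 2 * (y k) ^ 2)
      + (∑ k, Real.cot ((-α) k) / 2 * (y k) ^ 2) = 0 := by
    rw [← Finset.sum_add_distrib]
    apply Finset.sum_eq_zero
    intro k _
    have hk : (-α) k = -(α k) := by simp
    rw [hk, Real.cot_eq_cos_div_sin, Real.cot_eq_cos_div_sin, Real.cos_neg, Real.sin_neg,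
      div_neg]
    ring
  rw [← mul_add, ← Complex.ofReal_add, hz]
  simp

end Aux

/-- FRFT and the Laplacian related to chirp functions. -/
theorem frft_laplacian {n : ℕ} (α : Rn n) (hα : notPiZ α) (f : 𝓢(Rn n, ℂ)) (x : Rn n) :
    frft α (fun y => -(chirp (-α) y *
        ∑ j, partialD j (partialD j (fun z => chirp α z * f z)) y)) x
      = 4 * (π : ℂ) ^ 2 * ((‖tilde α x‖ ^ 2 : ℝ) : ℂ) * frft α (⇑f) x := by
  classical
  set t : Rn n := tilde α x with htdef
  set h : 𝓢(Rn n, ℂ) := chirpSMul α f with hh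
  have hg : (fun z => chirp α z * f z) = ⇑h := by
    funext z; rw [hh, chirpSMul_apply]; ring
  set P : Fin n → 𝓢(Rn n, ℂ) := fun j =>
    LineDeriv.lineDerivOp (EuclideanSpace.single j (1:ℝ))
      (LineDeriv.lineDerivOp (EuclideanSpace.single j (1:ℝ)) h) with hPdef
  have hP1 : ∀ j : Fin n, partialD j (fun z => chirp α z * f z)
      = ⇑(LineDeriv.lineDerivOp (EuclideanSpace.single j (1:ℝ)) h) := by
    intro j; funext w
    rw [partialD, hg, SchwartzMap.lineDerivOp_apply_eq_fderiv]
  have hP : ∀ (j : Fin n) (y : Rn n),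
      partialD j (partialD j (fun z => chirp α z * f z)) y = P j y := by
    intro j y
    rw [partialD, hP1 j, hPdef, SchwartzMap.lineDerivOp_apply_eq_fderiv]
  have key : (fun y => chirp α y *
      -(chirp (-α) y * ∑ j, partialD j (partialD j (fun z => chirp α z * f z)) y))
      = ⇑(-(∑ j : Fin n, P j)) := by
    funext y
    have e1 : ⇑(-(∑ j : Fin n, P j)) = -(⇑(∑ j : Fin n, P j)) :=
      map_neg (SchwartzMap.coeHom 𝓢(Rn n, ℂ) (Rn n) ℂ) _
    have e2 : ⇑(∑ j : Fin n, P j) = ∑ j : Fin n, ⇑(P j) :=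
      map_sum (SchwartzMap.coeHom 𝓢(Rn n, ℂ) (Rn n) ℂ) _ _
    rw [e1, e2, Pi.neg_apply, Finset.sum_apply]
    simp only [hP]
    calc chirp α y * -(chirp (-α) y * ∑ j, P j y)
        = -((chirp α y * chirp (-α) y) * ∑ j, P j y) := by ring
      _ = -∑ j, P j y := by rw [chirp_mul_neg, one_mul]
  have hsq : ∀ c : ℂ, (2 * (π:ℂ) * Complex.I * c)^2 = -(4 * (π:ℂ)^2 * c^2) := by
    intro c
    linear_combination (4 * (π:ℂ)^2 * c^2) * Complex.I_sq
  have hPj : ∀ j : Fin n, 𝓕 (⇑(P j)) t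
      = -(4 * (π:ℂ)^2 * ((t j : ℝ) : ℂ)^2) * 𝓕 (⇑h) t := by
    intro j
    have c1 : ⇑(P j) = fun y =>
        fderiv ℝ (⇑(LineDeriv.lineDerivOp (EuclideanSpace.single j (1:ℝ)) h)) y
          (EuclideanSpace.single j (1:ℝ)) := by
      funext y; rw [hPdef, SchwartzMap.lineDerivOp_apply_eq_fderiv]
    have c2 : ⇑(LineDeriv.lineDerivOp (EuclideanSpace.single j (1:ℝ)) h) = fun y =>
        fderiv ℝ (⇑h) y (EuclideanSpace.single j (1:ℝ)) := by
      funext y; rw [SchwartzMap.lineDerivOp_apply_eq_fderiv]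
    rw [c1, fourier_pderiv, c2, fourier_pderiv, ← hsq]
    ring
  have hF : 𝓕 (⇑(-(∑ j : Fin n, P j))) t
      = (∑ j, 4 * (π:ℂ)^2 * ((t j : ℝ) : ℂ)^2) * 𝓕 (⇑h) t := by
    rw [← SchwartzMap.fourier_coe, ← SchwartzMap.fourierTransformCLM_apply ℝ, map_neg, map_sum]
    have e1 : ⇑(-(∑ j : Fin n, SchwartzMap.fourierTransformCLM ℝ (P j)))
        = -(⇑(∑ j : Fin n, SchwartzMap.fourierTransformCLM ℝ (P j))) :=
      map_neg (SchwartzMap.coeHom 𝓢(Rn n, ℂ) (Rn n) ℂ) _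
    have e2 : ⇑(∑ j : Fin n, SchwartzMap.fourierTransformCLM ℝ (P j))
        = ∑ j : Fin n, ⇑(SchwartzMap.fourierTransformCLM ℝ (P j)) :=
      map_sum (SchwartzMap.coeHom 𝓢(Rn n, ℂ) (Rn n) ℂ) _ _
    rw [e1, e2, Pi.neg_apply, Finset.sum_apply]
    simp only [SchwartzMap.fourierTransformCLM_apply, SchwartzMap.fourier_coe]
    simp only [hPj]
    rw [← Finset.sum_mul, ← neg_mul]
    congr 1
    rw [← Finset.sum_neg_distrib]
    apply Finset.sum_congr rfl
    intro j _
    ring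
  have hnorm : ((‖t‖^2 : ℝ) : ℂ) = ∑ j, ((t j : ℝ) : ℂ)^2 := by
    have hr : ‖t‖^2 = ∑ j, (t j)^2 := by
      rw [← real_inner_self_eq_norm_sq, PiLp.inner_apply]
      simp [RCLike.inner_apply, sq]
    rw [hr]
    push_cast
    rfl
  rw [frft_eq, frft_eq, key, hF, hg, hnorm, ← htdef]
  rw [Finset.mul_sum]
  ring
end
end

section
/- (Hardy–Littlewood–Sobolev for the fractional Riesz potential related to chirp functions, weak type) Let β ∈ (0,n) and α ∈ ℝⁿ with no coordinate in πℤ. There exists C > 0 such that for all f ∈ L¹(ℝⁿ) and all λ > 0, the Lebesgue measure of {x ∈ ℝⁿ : |I_β^α f(x)| > λ} is at most C (‖f‖_{L¹}/λ)^{n/(n-β)}. -/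
open MeasureTheory Real SchwartzMap Filter
open scoped FourierTransform

noncomputable section

open scoped ENNReal

open Metric in
lemma aux_norm_chirp {n : ℕ} (α : Rn n) (x : Rn n) : ‖chirp α x‖ = 1 := by
  unfold chirp
  set r : ℝ := (∑ k, Real.cot (α k) / 2 * (x k) ^ 2 : ℝ) with hr
  have : 2 * (π:ℂ) * Complex.I * ((r:ℝ):ℂ) = ((2*π*r :ℝ):ℂ) * Complex.I := by
    push_cast; ring
  rw [this, Complex.norm_exp_ofReal_mul_I]


open Metric in
lemma aux_fin {n : ℕ} {s : ℝ} (hs : 0 < s) (hsn : s < n) :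
    ∫⁻ z : Rn n in Metric.ball 0 1, ENNReal.ofReal (‖z‖ ^ (-s)) < ∞ := by
  have hmes : Measurable fun z : Rn n => ‖z‖ ^ (-s) := by fun_prop
  rw [lintegral_eq_lintegral_meas_le _ (Eventually.of_forall fun z => by positivity)
    (hmes.aemeasurable)]
  set B := volume (Metric.ball (0 : Rn n) 1) with hB
  have hBfin : B < ∞ := measure_ball_lt_top
  set μr := volume.restrict (Metric.ball (0 : Rn n) 1) with hμr
  have hsub : ∀ t : ℝ, 0 < t →
      {z : Rn n | t ≤ ‖z‖ ^ (-s)} ⊆ Metric.closedBall 0 (t ^ (-s⁻¹)) := by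
    intro t ht z hz
    simp only [Set.mem_setOf_eq] at hz
    have hz0 : z ≠ 0 := by
      rintro rfl
      rw [norm_zero, Real.zero_rpow (neg_ne_zero.2 hs.ne')] at hz
      linarith
    have hzpos : (0:ℝ) < ‖z‖ := norm_pos_iff.mpr hz0
    have h1 : (‖z‖ ^ (-s)) ^ (-s⁻¹) ≤ t ^ (-s⁻¹) :=
      Real.rpow_le_rpow_of_nonpos ht hz (neg_nonpos.2 (inv_nonneg.2 hs.le))
    rw [← Real.rpow_mul hzpos.le, neg_mul_neg, mul_inv_cancel₀ hs.ne',
      Real.rpow_one] at h1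
    simpa [Metric.mem_closedBall, dist_zero_right] using h1
  have hbound2 : ∀ t : ℝ, 1 < t →
      μr {z : Rn n | t ≤ ‖z‖ ^ (-s)} ≤ ENNReal.ofReal (t ^ (-s⁻¹ * n)) * B := by
    intro t ht
    calc μr {z : Rn n | t ≤ ‖z‖ ^ (-s)}
        ≤ volume {z : Rn n | t ≤ ‖z‖ ^ (-s)} := Measure.restrict_apply_le _ _
      _ ≤ volume (Metric.closedBall (0 : Rn n) (t ^ (-s⁻¹))) :=
          measure_mono (hsub t (by linarith))
      _ = ENNReal.ofReal ((t ^ (-s⁻¹)) ^ Module.finrank ℝ (Rn n)) * B := by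
          rw [Measure.addHaar_closedBall _ _ (by positivity)]
      _ = ENNReal.ofReal (t ^ (-s⁻¹ * n)) * B := by
          rw [finrank_euclideanSpace_fin, ← Real.rpow_natCast (t ^ (-s⁻¹)) n,
            ← Real.rpow_mul (by positivity)]
  calc ∫⁻ t in Set.Ioi (0:ℝ), μr {z : Rn n | t ≤ ‖z‖ ^ (-s)}
      ≤ ∫⁻ t in Set.Ioc (0:ℝ) 1 ∪ Set.Ioi 1, μr {z : Rn n | t ≤ ‖z‖ ^ (-s)} :=
        lintegral_mono_set Set.Ioi_subset_Ioc_union_Ioi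
    _ ≤ (∫⁻ t in Set.Ioc (0:ℝ) 1, μr {z : Rn n | t ≤ ‖z‖ ^ (-s)})
        + ∫⁻ t in Set.Ioi (1:ℝ), μr {z : Rn n | t ≤ ‖z‖ ^ (-s)} := lintegral_union_le _ _ _
    _ < ∞ := by
        refine ENNReal.add_lt_top.2 ⟨?_, ?_⟩
        · calc ∫⁻ t in Set.Ioc (0:ℝ) 1, μr {z : Rn n | t ≤ ‖z‖ ^ (-s)}
              ≤ ∫⁻ _ in Set.Ioc (0:ℝ) 1, B := by
                refine lintegral_mono fun t => ?_
                exact le_trans (measure_mono (Set.subset_univ _))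
                  (by rw [Measure.restrict_apply_univ])
            _ = B * volume (Set.Ioc (0:ℝ) 1) := setLIntegral_const _ _
            _ < ∞ := ENNReal.mul_lt_top hBfin (by simp [Real.volume_Ioc])
        · calc ∫⁻ t in Set.Ioi (1:ℝ), μr {z : Rn n | t ≤ ‖z‖ ^ (-s)}
              ≤ ∫⁻ t in Set.Ioi (1:ℝ), ENNReal.ofReal (t ^ (-s⁻¹ * n)) * B := by
                refine setLIntegral_mono' measurableSet_Ioi fun t ht => hbound2 t ht
            _ = (∫⁻ t in Set.Ioi (1:ℝ), ENNReal.ofReal (t ^ (-s⁻¹ * n))) * B :=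
                lintegral_mul_const' _ _ hBfin.ne
            _ < ∞ := by
                refine ENNReal.mul_lt_top ?_ hBfin
                refine IntegrableOn.setLIntegral_lt_top ?_
                refine integrableOn_Ioi_rpow_of_lt ?_ one_pos
                rw [neg_mul, neg_lt_neg_iff]
                rw [lt_inv_mul_iff₀ hs, mul_one]
                exact hsn

open Metric in
lemma aux_scale {n : ℕ} {s : ℝ} (hs : 0 < s) {δ : ℝ} (hδ : 0 < δ) :
    ∫⁻ z : Rn n in Metric.ball 0 δ, ENNReal.ofReal (‖z‖ ^ (-s))
      = ENNReal.ofReal (δ ^ ((n:ℝ) - s)) *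
        ∫⁻ z : Rn n in Metric.ball 0 1, ENNReal.ofReal (‖z‖ ^ (-s)) := by
  have hmes : Measurable fun z : Rn n => ENNReal.ofReal (‖z‖ ^ (-s)) := by fun_prop
  set k : Rn n → ℝ≥0∞ :=
    (Metric.ball (0 : Rn n) δ).indicator fun z => ENNReal.ofReal (‖z‖ ^ (-s)) with hk
  have hkm : Measurable k := hmes.indicator measurableSet_ball
  have h1 : ENNReal.ofReal (|((δ:ℝ) ^ n)|⁻¹) * ∫⁻ z, k z = ∫⁻ a : Rn n, k (δ • a) := by
    rw [← smul_eq_mul, ← lintegral_smul_measure]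
    rw [show (ENNReal.ofReal (|((δ:ℝ) ^ n)|⁻¹) • (volume : Measure (Rn n)))
        = Measure.map (δ • ·) volume by
      rw [Measure.map_addHaar_smul volume hδ.ne', finrank_euclideanSpace_fin, abs_inv]]
    rw [lintegral_map hkm (measurable_const_smul δ)]
  have h2 : ∀ a : Rn n, k (δ • a) = ENNReal.ofReal (δ ^ (-s)) *
      (Metric.ball (0 : Rn n) 1).indicator (fun z => ENNReal.ofReal (‖z‖ ^ (-s))) a := by
    intro a
    have hn : ‖δ • a‖ = δ * ‖a‖ := by
      rw [norm_smul, Real.norm_eq_abs, abs_of_pos hδ]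
    by_cases ha : ‖a‖ < 1
    · have hmem : δ • a ∈ Metric.ball (0 : Rn n) δ := by
        rw [Metric.mem_ball, dist_zero_right, hn]
        nlinarith
      rw [hk, Set.indicator_of_mem hmem, Set.indicator_of_mem (by
        rwa [Metric.mem_ball, dist_zero_right])]
      rw [hn, Real.mul_rpow hδ.le (norm_nonneg a), ENNReal.ofReal_mul (by positivity)]
    · have hmem : δ • a ∉ Metric.ball (0 : Rn n) δ := by
        rw [Metric.mem_ball, dist_zero_right, hn]
        intro h
        nlinarith [norm_nonneg a]
      rw [hk, Set.indicator_of_notMem hmem, Set.indicator_of_notMem (by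
        rwa [Metric.mem_ball, dist_zero_right]), mul_zero]
  rw [funext h2] at h1
  rw [lintegral_const_mul _ (hmes.indicator measurableSet_ball)] at h1
  have key : ∫⁻ z, k z = ENNReal.ofReal (δ ^ (n:ℕ)) * (ENNReal.ofReal (δ ^ (-s)) *
      ∫⁻ a, (Metric.ball (0 : Rn n) 1).indicator (fun z => ENNReal.ofReal (‖z‖ ^ (-s))) a) := by
    rw [← h1, ← mul_assoc, ← ENNReal.ofReal_mul (by positivity),
      abs_of_pos (by positivity), mul_inv_cancel₀ (by positivity), ENNReal.ofReal_one, one_mul]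
  simp only [hk] at key
  rw [lintegral_indicator measurableSet_ball, lintegral_indicator measurableSet_ball] at key
  rw [key, ← mul_assoc, ← ENNReal.ofReal_mul (by positivity)]
  congr 2
  rw [← Real.rpow_natCast δ n, ← Real.rpow_add hδ, sub_eq_add_neg]


/-- Hardy–Littlewood–Sobolev for `I_β^α`, weak type. -/
theorem rieszPotChirp_HLS_weak {n : ℕ} (β : ℝ) (hβ : 0 < β) (hβn : β < n)
    (α : Rn n) (hα : notPiZ α) :
    ∃ C > 0, ∀ f : Rn n → ℂ, Integrable f → ∀ l : ℝ, 0 < l →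
      volume {x : Rn n | l < ‖rieszPotChirp α β f x‖}
        ≤ ENNReal.ofReal (C * (((∫ y, ‖f y‖) / l) ^ ((n : ℝ) / ((n : ℝ) - β)))) := by
  have hn : 0 < (n:ℝ) := lt_trans hβ hβn
  set s : ℝ := (n:ℝ) - β with hsdef
  have hs : 0 < s := by simp only [hsdef, sub_pos]; exact hβn
  have hsn : s < n := by simp only [hsdef]; linarith
  set p : ℝ := (n:ℝ)/s with hpdef
  -- positivity of the gamma constant
  have hγ : 0 < gammaC n β := by
    unfold gammaC
    have h1 : 0 < Real.Gamma (β/2) := Real.Gamma_pos_of_pos (by linarith)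
    have h2 : 0 < Real.Gamma (((n:ℝ)-β)/2) := Real.Gamma_pos_of_pos (by linarith)
    positivity
  set c0 : ℝ := 1 / gammaC n β with hc0
  have hc0pos : 0 < c0 := by positivity
  -- the unit-ball kernel integral
  set A : ℝ≥0∞ := ∫⁻ z : Rn n in Metric.ball 0 1, ENNReal.ofReal (‖z‖ ^ (-s)) with hA
  have hAfin : A < ∞ := aux_fin hs hsn
  set A1 : ℝ := A.toReal with hA1def
  have hA1 : A = ENNReal.ofReal A1 := (ENNReal.ofReal_toReal hAfin.ne).symm
  have hA1nn : 0 ≤ A1 := ENNReal.toReal_nonneg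
  refine ⟨(2*c0)^p * (A1+1), by positivity, ?_⟩
  intro f hf l hl
  set N : ℝ := ∫ y, ‖f y‖ with hN
  have hNnn : 0 ≤ N := integral_nonneg fun y => norm_nonneg _
  -- the kernel
  set kf : Rn n → ℝ≥0∞ := fun z => ENNReal.ofReal (‖z‖ ^ (-s)) with hkf
  have hkfm : Measurable kf := by fun_prop
  -- pointwise bound
  have hpt : ∀ x : Rn n, ENNReal.ofReal ‖rieszPotChirp α β f x‖
      ≤ ENNReal.ofReal c0 * ∫⁻ y, ENNReal.ofReal ‖f y‖ * kf (x - y) := by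
    intro x
    unfold rieszPotChirp
    have hnrm : ‖((1 / gammaC n β : ℝ) : ℂ) * chirp (-α) x *
        ∫ y, f y * chirp α y / ((‖x - y‖ ^ ((n : ℝ) - β) : ℝ) : ℂ)‖
        = c0 * ‖∫ y, f y * chirp α y / ((‖x - y‖ ^ ((n : ℝ) - β) : ℝ) : ℂ)‖ := by
      rw [norm_mul, norm_mul, aux_norm_chirp, Complex.norm_real, Real.norm_eq_abs,
        abs_of_pos (by positivity), mul_one]
    rw [hnrm, ENNReal.ofReal_mul hc0pos.le]
    refine mul_le_mul_right ?_ _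
    calc ENNReal.ofReal ‖∫ y, f y * chirp α y / ((‖x - y‖ ^ ((n : ℝ) - β) : ℝ) : ℂ)‖
        = (‖∫ y, f y * chirp α y / ((‖x - y‖ ^ ((n : ℝ) - β) : ℝ) : ℂ)‖₊ : ℝ≥0∞) :=
          ofReal_norm_eq_enorm _
      _ ≤ ∫⁻ y, (‖f y * chirp α y / ((‖x - y‖ ^ ((n : ℝ) - β) : ℝ) : ℂ)‖₊ : ℝ≥0∞) :=
          enorm_integral_le_lintegral_enorm _
      _ = ∫⁻ y, ENNReal.ofReal ‖f y‖ * kf (x - y) := by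
          refine lintegral_congr fun y => ?_
          rw [← enorm_eq_nnnorm, ← ofReal_norm_eq_enorm, norm_div, norm_mul, aux_norm_chirp, mul_one,
            Complex.norm_real, Real.norm_eq_abs, abs_of_nonneg (Real.rpow_nonneg (norm_nonneg _) _)]
          rw [div_eq_mul_inv, ← Real.rpow_neg (norm_nonneg _), ← hsdef]
          rw [ENNReal.ofReal_mul (norm_nonneg _)]
  -- trivial case f = 0 a.e.
  rcases eq_or_lt_of_le hNnn with hN0 | hNpos
  · have hf0 : f =ᵐ[volume] 0 := by
      have h := (integral_eq_zero_iff_of_nonneg (fun y => norm_nonneg (f y)) hf.norm).mp hN0.symm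
      filter_upwards [h] with y hy
      simpa using hy
    have hz : ∀ x : Rn n, rieszPotChirp α β f x = 0 := by
      intro x
      unfold rieszPotChirp
      rw [integral_congr_ae (g := fun _ => (0:ℂ)) (by
        filter_upwards [hf0] with y hy
        simp [hy]), integral_zero, mul_zero]
    have hset : {x : Rn n | l < ‖rieszPotChirp α β f x‖} = ∅ := by
      ext x
      simp [hz x, hl.le, not_lt.2 hl.le]
    rw [hset]
    simp
  -- main case
  -- measurable version of the norm of f
  have hgae' : AEMeasurable (fun y : Rn n => ENNReal.ofReal ‖f y‖) volume :=
    ENNReal.measurable_ofReal.comp_aemeasurable hf.1.norm.aemeasurable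
  set g : Rn n → ℝ≥0∞ := hgae'.mk _ with hg
  have hgm : Measurable g := hgae'.measurable_mk
  have hgae : (fun y : Rn n => ENNReal.ofReal ‖f y‖) =ᵐ[volume] g := hgae'.ae_eq_mk
  have hgint : ∫⁻ y, g y = ENNReal.ofReal N := by
    rw [← lintegral_congr_ae hgae, hN]
    rw [ofReal_integral_norm_eq_lintegral_enorm hf]
    exact lintegral_congr fun y => ofReal_norm_eq_enorm _
  have hgrw : ∀ x : Rn n, ∫⁻ y, ENNReal.ofReal ‖f y‖ * kf (x - y) = ∫⁻ y, g y * kf (x - y) := by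
    intro x
    refine lintegral_congr_ae ?_
    filter_upwards [hgae] with y hy
    rw [hy]
  -- the radius δ
  set R : ℝ := 2*c0*N/l with hR
  have hRpos : 0 < R := by positivity
  set δ : ℝ := R ^ s⁻¹ with hδdef
  have hδpos : 0 < δ := Real.rpow_pos_of_pos hRpos _
  have hδs : δ ^ (-s) = R⁻¹ := by
    rw [hδdef, ← Real.rpow_mul hRpos.le, show s⁻¹ * -s = -1 by field_simp,
      Real.rpow_neg_one]
  have hδβ : δ ^ β = R ^ (β/s) := by
    rw [hδdef, ← Real.rpow_mul hRpos.le, inv_mul_eq_div]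
  -- split kernel
  set k1 : Rn n → ℝ≥0∞ := (Metric.ball (0 : Rn n) δ).indicator kf with hk1
  set k2 : Rn n → ℝ≥0∞ := (Metric.ball (0 : Rn n) δ)ᶜ.indicator kf with hk2
  have hk1m : Measurable k1 := hkfm.indicator measurableSet_ball
  have hk2m : Measurable k2 := hkfm.indicator measurableSet_ball.compl
  have hk12 : ∀ z, kf z = k1 z + k2 z := by
    intro z
    rw [hk1, hk2]
    exact (congrFun (Set.indicator_self_add_compl (Metric.ball (0 : Rn n) δ) kf) z).symm
  set F1 : Rn n → ℝ≥0∞ := fun x => ∫⁻ y, g y * k1 (x - y) with hF1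
  have hF1m : Measurable F1 := by
    refine Measurable.lintegral_prod_right ?_
    exact (hgm.comp measurable_snd).mul (hk1m.comp (measurable_fst.sub measurable_snd))
  -- bound on the far part
  have hk2le : ∀ z, k2 z ≤ ENNReal.ofReal (δ ^ (-s)) := by
    intro z
    rw [hk2]
    by_cases hz : z ∈ (Metric.ball (0 : Rn n) δ)ᶜ
    · rw [Set.indicator_of_mem hz]
      have hz' : δ ≤ ‖z‖ := by
        simpa [Metric.mem_ball, dist_zero_right, not_lt] using hz
      exact ENNReal.ofReal_le_ofReal
        (Real.rpow_le_rpow_of_nonpos hδpos hz' (neg_nonpos.2 hs.le))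
    · rw [Set.indicator_of_notMem hz]
      exact zero_le
  have hF2le : ∀ x : Rn n, ∫⁻ y, g y * k2 (x - y) ≤ ENNReal.ofReal (δ ^ (-s)) * ENNReal.ofReal N := by
    intro x
    calc ∫⁻ y, g y * k2 (x - y) ≤ ∫⁻ y, g y * ENNReal.ofReal (δ ^ (-s)) :=
          lintegral_mono fun y => mul_le_mul_right (hk2le _) _
      _ = ENNReal.ofReal (δ ^ (-s)) * ∫⁻ y, g y := by
          rw [lintegral_mul_const' _ _ ENNReal.ofReal_ne_top, mul_comm]
      _ = ENNReal.ofReal (δ ^ (-s)) * ENNReal.ofReal N := by rw [hgint]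
  -- the half-level bound
  have hhalf : c0 * (δ ^ (-s) * N) = l/2 := by
    rw [hδs, hR]
    field_simp
  -- set inclusion
  have hEsub : {x : Rn n | l < ‖rieszPotChirp α β f x‖}
      ⊆ {x : Rn n | ENNReal.ofReal (l/2) < ENNReal.ofReal c0 * F1 x} := by
    intro x hx
    simp only [Set.mem_setOf_eq] at hx ⊢
    by_contra hcon
    push_neg at hcon
    have h0 : (0:ℝ) < ‖rieszPotChirp α β f x‖ := lt_trans hl hx
    have h1 : ENNReal.ofReal l < ENNReal.ofReal c0 * ∫⁻ y, g y * kf (x - y) := by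
      refine lt_of_lt_of_le ?_ (le_trans (hpt x) (by rw [hgrw x]))
      exact (ENNReal.ofReal_lt_ofReal_iff h0).mpr hx
    have hsplit : ∫⁻ y, g y * kf (x - y) = F1 x + ∫⁻ y, g y * k2 (x - y) := by
      have hcong : ∀ y, g y * kf (x - y) = g y * k1 (x - y) + g y * k2 (x - y) := fun y => by
        rw [hk12 (x - y), mul_add]
      have hm : Measurable fun y : Rn n => g y * k1 (x - y) :=
        hgm.mul (hk1m.comp (measurable_const.sub measurable_id))
      rw [lintegral_congr hcong, lintegral_add_left hm]
    rw [hsplit, mul_add] at h1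
    have h2 : ENNReal.ofReal c0 * ∫⁻ y, g y * k2 (x - y) ≤ ENNReal.ofReal (l/2) := by
      calc ENNReal.ofReal c0 * ∫⁻ y, g y * k2 (x - y)
          ≤ ENNReal.ofReal c0 * (ENNReal.ofReal (δ ^ (-s)) * ENNReal.ofReal N) :=
            mul_le_mul_right (hF2le x) _
        _ = ENNReal.ofReal (c0 * (δ ^ (-s) * N)) := by
            rw [ENNReal.ofReal_mul hc0pos.le, ENNReal.ofReal_mul (Real.rpow_nonneg hδpos.le (-s))]
        _ = ENNReal.ofReal (l/2) := by rw [hhalf]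
    have h3 : ENNReal.ofReal l < ENNReal.ofReal (l/2) + ENNReal.ofReal (l/2) :=
      lt_of_lt_of_le h1 (add_le_add hcon h2)
    rw [← ENNReal.ofReal_add (by positivity) (by positivity)] at h3
    norm_num at h3
  -- Chebyshev
  have hcheb : volume {x : Rn n | ENNReal.ofReal (l/2) < ENNReal.ofReal c0 * F1 x}
      ≤ (∫⁻ x, ENNReal.ofReal c0 * F1 x) / ENNReal.ofReal (l/2) := by
    calc volume {x : Rn n | ENNReal.ofReal (l/2) < ENNReal.ofReal c0 * F1 x}
        ≤ volume {x : Rn n | ENNReal.ofReal (l/2) ≤ ENNReal.ofReal c0 * F1 x} :=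
          measure_mono fun x hx => by
            simp only [Set.mem_setOf_eq] at hx ⊢
            exact le_of_lt hx
      _ ≤ (∫⁻ x, ENNReal.ofReal c0 * F1 x) / ENNReal.ofReal (l/2) :=
          meas_ge_le_lintegral_div (hF1m.const_mul _).aemeasurable
            (by simp [ENNReal.ofReal_eq_zero, not_le, half_pos hl]) ENNReal.ofReal_ne_top
  have hk1int : ∫⁻ z, k1 z = ENNReal.ofReal (δ ^ β) * ENNReal.ofReal A1 := by
    rw [hk1, lintegral_indicator measurableSet_ball]
    have := aux_scale (n := n) hs hδpos
    rw [hkf]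
    rw [this, ← hA, hA1]
    congr 2
    rw [hsdef]
    ring_nf
  -- Tonelli computation
  have hTon : ∫⁻ x, F1 x = (∫⁻ z, k1 z) * ENNReal.ofReal N := by
    rw [hF1]
    rw [lintegral_lintegral_swap
      (((hgm.comp measurable_snd).mul (hk1m.comp (measurable_fst.sub measurable_snd))).aemeasurable)]
    calc ∫⁻ y, ∫⁻ x, g y * k1 (x - y) = ∫⁻ y, g y * ∫⁻ x, k1 (x - y) := by
          refine lintegral_congr fun y => ?_
          have hm : Measurable fun x : Rn n => k1 (x - y) :=
            hk1m.comp (measurable_id.sub measurable_const)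
          rw [lintegral_const_mul _ hm]
      _ = ∫⁻ y, g y * ∫⁻ z, k1 z := by
          refine lintegral_congr fun y => ?_
          rw [lintegral_sub_right_eq_self k1 y]
      _ = (∫⁻ z, k1 z) * ENNReal.ofReal N := by
          rw [lintegral_mul_const' _ _ (by
            rw [hk1int]
            exact ENNReal.mul_ne_top ENNReal.ofReal_ne_top ENNReal.ofReal_ne_top),
            mul_comm, hgint, mul_comm]
  -- final chain
  calc volume {x : Rn n | l < ‖rieszPotChirp α β f x‖}
      ≤ volume {x : Rn n | ENNReal.ofReal (l/2) < ENNReal.ofReal c0 * F1 x} :=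
        measure_mono hEsub
    _ ≤ (∫⁻ x, ENNReal.ofReal c0 * F1 x) / ENNReal.ofReal (l/2) := hcheb
    _ = ENNReal.ofReal (c0 * (δ ^ β * A1 * N)) / ENNReal.ofReal (l/2) := by
        rw [lintegral_const_mul _ hF1m, hTon, hk1int]
        rw [← ENNReal.ofReal_mul (by positivity), ← ENNReal.ofReal_mul (by positivity),
          ← ENNReal.ofReal_mul hc0pos.le]
    _ = ENNReal.ofReal (c0 * (δ ^ β * A1 * N) / (l/2)) := by
        rw [ENNReal.ofReal_div_of_pos (half_pos hl)]
    _ ≤ ENNReal.ofReal ((2*c0)^p * (A1+1) * ((N / l) ^ p)) := by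
        refine ENNReal.ofReal_le_ofReal ?_
        have hRNl : R = (2*c0) * (N/l) := by rw [hR]; ring
        have hRp : R ^ p = (2*c0)^p * (N/l)^p := by
          rw [hRNl, Real.mul_rpow (by positivity) (by positivity)]
        have hps : p = β/s + 1 := by
          rw [hpdef, hsdef]
          field_simp
          rw [div_add_one (sub_ne_zero.2 hβn.ne'), add_sub_cancel]
        calc c0 * (δ ^ β * A1 * N) / (l/2) = A1 * R ^ p := by
              rw [hδβ, hps, Real.rpow_add hRpos, Real.rpow_one, hR]
              field_simp
          _ ≤ (A1 + 1) * R ^ p := by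
              have := Real.rpow_nonneg hRpos.le p
              nlinarith
          _ = (2*c0)^p * (A1+1) * ((N / l) ^ p) := by rw [hRp]; ring
end
end
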